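/- Let p(i_A,i_B|o_A,o_B) be a conditional probability distribution (nonnegative, summing to 1 over (i_A,i_B) for each fixed (o_A,o_B)). Then the following are equivalent: (1) ∑_{i_A,i_B,o_A,o_B} p(i_A,i_B|o_A,o_B) p_A(o_A|i_A) p_B(o_B|i_B) = 1 for all conditional probability distributions p_A and p_B; (2) for all finite-dimensional quantum instruments {A_{o_A|i_A}}_{o_A} and {B_{o_B|i_B}}_{o_B}, the map ∑_{i_A,i_B,o_A,o_B} p(i_A,i_B|o_A,o_B) A_{o_A|i_A} ⊗ B_{o_B|i_B} is CPTP. -/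

import Mathlib

open Matrix BigOperators ComplexOrder Kronecker

noncomputable section

abbrev Mat (n : Type) [Fintype n] [DecidableEq n] : Type := Matrix n n ℂ

def sliceM {n : Type} [Fintype n] [DecidableEq n] {k : Type} (X : Matrix (n × k) (n × k) ℂ) (i j : k) :
    Matrix n n ℂ := Matrix.of fun a b => X (a, i) (b, j)

def IsCP {n m : Type} [Fintype n][DecidableEq n][Fintype m][DecidableEq m]
    (M : Mat n →ₗ[ℂ] Mat m) : Prop :=
  ∀ (d : ℕ) (X : Matrix (n × Fin d) (n × Fin d) ℂ), X.PosSemidef →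
    (Matrix.of fun p q : m × Fin d => (M (sliceM X p.2 q.2)) p.1 q.1).PosSemidef

def IsTP {n m : Type} [Fintype n][DecidableEq n][Fintype m][DecidableEq m]
    (M : Mat n →ₗ[ℂ] Mat m) : Prop := ∀ X : Mat n, (M X).trace = X.trace

def tensorMap {nA mA nB mB : Type} [Fintype nA][DecidableEq nA][Fintype mA][DecidableEq mA]
    [Fintype nB][DecidableEq nB][Fintype mB][DecidableEq mB]
    (A : Mat nA →ₗ[ℂ] Mat mA) (B : Mat nB →ₗ[ℂ] Mat mB) :
    Mat (nA × nB) →ₗ[ℂ] Mat (mA × mB) where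
  toFun X := ∑ c : nA, ∑ c' : nA, ∑ d : nB, ∑ d' : nB,
    X (c, d) (c', d') • ((A (Matrix.single c c' 1)) ⊗ₖ (B (Matrix.single d d' 1)))
  map_add' X Y := by
    simp [Matrix.add_apply, add_smul, Finset.sum_add_distrib]
  map_smul' r X := by
    simp [Matrix.smul_apply, smul_smul, Finset.smul_sum]

lemma sum_swap4 {M : Type*} [AddCommMonoid M] {α β γ δ : Type*}
    [Fintype α] [Fintype β] [Fintype γ] [Fintype δ] (f : α → β → γ → δ → M) :
    ∑ a, ∑ b, ∑ c, ∑ d, f a b c d = ∑ c, ∑ d, ∑ a, ∑ b, f a b c d :=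
  calc ∑ a, ∑ b, ∑ c, ∑ d, f a b c d
      = ∑ a, ∑ c, ∑ b, ∑ d, f a b c d :=
        Finset.sum_congr rfl fun a _ => Finset.sum_comm
    _ = ∑ c, ∑ a, ∑ b, ∑ d, f a b c d := Finset.sum_comm
    _ = ∑ c, ∑ a, ∑ d, ∑ b, f a b c d :=
        Finset.sum_congr rfl fun c _ => Finset.sum_congr rfl fun a _ => Finset.sum_comm
    _ = ∑ c, ∑ d, ∑ a, ∑ b, f a b c d :=
        Finset.sum_congr rfl fun c _ => Finset.sum_comm
set_option linter.unusedSectionVars false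
section Aux
variable {n m : Type} [Fintype n] [DecidableEq n] [Fintype m] [DecidableEq m]

lemma psd_add {A B : Matrix n n ℂ} (hA : A.PosSemidef) (hB : B.PosSemidef) :
    (A + B).PosSemidef :=
  ⟨hA.1.add hB.1, fun x => by
    simpa [mul_add, add_mul] using add_nonneg (hA.2 x) (hB.2 x)⟩

lemma psd_sum {ι : Type*} (s : Finset ι) (f : ι → Matrix n n ℂ)
    (h : ∀ i ∈ s, (f i).PosSemidef) : (∑ i ∈ s, f i).PosSemidef := by
  classical
  induction s using Finset.induction_on with
  | empty => simpa using Matrix.PosSemidef.zero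
  | insert x s hx ih =>
    rw [Finset.sum_insert hx]
    exact psd_add (h _ (Finset.mem_insert_self _ _))
      (ih fun i hi => h i (Finset.mem_insert_of_mem hi))

lemma psd_smul {A : Matrix n n ℂ} (hA : A.PosSemidef) {r : ℝ} (hr : 0 ≤ r) :
    ((r : ℂ) • A).PosSemidef := by
  constructor
  · unfold Matrix.IsHermitian
    rw [Matrix.conjTranspose_smul, hA.1]
    congr 1
    simp [Complex.ext_iff]
  · intro x
    have h0 : (0:ℂ) ≤ (r:ℂ) := by
      rw [Complex.le_def]; simp [hr]
    exact (Matrix.PosSemidef.smul hA h0).2 x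

lemma conjTranspose_kron {A : Matrix n n ℂ} {B : Matrix m m ℂ} :
    (A ⊗ₖ B)ᴴ = Aᴴ ⊗ₖ Bᴴ := by
  ext ⟨a, b⟩ ⟨c, d⟩
  simp [Matrix.conjTranspose_apply, Matrix.kroneckerMap_apply, star_mul']

open scoped MatrixOrder in
lemma psd_eq_star {A : Matrix n n ℂ} (hA : A.PosSemidef) : ∃ B : Matrix n n ℂ, A = Bᴴ * B := by
  obtain ⟨X, hX, -, hXX⟩ :=
    CFC.exists_sqrt_of_isSelfAdjoint_of_quasispectrumRestricts hA.isHermitian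
      (QuasispectrumRestricts.nnreal_of_nonneg hA.nonneg)
  exact ⟨X, by rw [← hXX, ← Matrix.star_eq_conjTranspose, hX.star_eq]⟩

lemma psd_kron {A : Matrix n n ℂ} {B : Matrix m m ℂ}
    (hA : A.PosSemidef) (hB : B.PosSemidef) : (A ⊗ₖ B).PosSemidef := by
  obtain ⟨A₁, rfl⟩ := psd_eq_star hA
  obtain ⟨B₁, rfl⟩ := psd_eq_star hB
  rw [Matrix.mul_kronecker_mul, ← conjTranspose_kron]
  exact Matrix.posSemidef_conjTranspose_mul_self _

lemma trace_psd_nonneg {A : Matrix n n ℂ} (hA : A.PosSemidef) : 0 ≤ A.trace := by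
  rw [Matrix.trace]
  apply Finset.sum_nonneg
  intro a _
  have := hA.2 (Finsupp.single a 1)
  simpa using this

end Aux
lemma stdBasis_decomp {n : Type} [DecidableEq n] [Fintype n] {c c' : n} (hcc : ¬ c = c') :
    Matrix.single c c' (1:ℂ)
      = (1/2 : ℂ) • (Matrix.of fun a b =>
            ((if a = c then 1 else 0) + (if a = c' then 1 else 0)) *
            star ((if b = c then (1:ℂ) else 0) + (if b = c' then 1 else 0)))
        + (Complex.I/2) • (Matrix.of fun a b =>
            ((if a = c then 1 else 0) + (if a = c' then Complex.I else 0)) *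
            star ((if b = c then (1:ℂ) else 0) + (if b = c' then Complex.I else 0)))
        - ((1 + Complex.I)/2) • Matrix.single c c 1
        - ((1 + Complex.I)/2) • Matrix.single c' c' 1 := by
  ext a b
  simp only [Matrix.sub_apply, Matrix.add_apply, Matrix.smul_apply,
    Matrix.of_apply, Matrix.single, smul_eq_mul]
  by_cases hac : a = c <;> by_cases hac' : a = c' <;>
    by_cases hbc : b = c <;> by_cases hbc' : b = c'
  all_goals first
    | exact absurd (hac.symm.trans hac') hcc
    | exact absurd (hbc.symm.trans hbc') hcc
    | (simp [hac, hac', hbc, hbc', hcc, Ne.symm hcc, eq_comm, Complex.ext_iff]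
       try norm_num
       try (split_ifs <;> simp_all))
  all_goals (intro h; subst h; simp_all)
section Choi
variable {n m : Type} [Fintype n] [DecidableEq n] [Fintype m] [DecidableEq m]

def choi (M : Mat n →ₗ[ℂ] Mat m) : Matrix (n × m) (n × m) ℂ :=
  Matrix.of fun x y => (M (Matrix.single x.1 y.1 1)) x.2 y.2

lemma map_apply_expand (M : Mat n →ₗ[ℂ] Mat m) (X : Mat n) :
    M X = ∑ a : n, ∑ b : n, X a b • M (Matrix.single a b 1) := by
  conv_lhs => rw [Matrix.matrix_eq_sum_single X]
  rw [map_sum]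
  refine Finset.sum_congr rfl fun a _ => ?_
  rw [map_sum]
  refine Finset.sum_congr rfl fun b _ => ?_
  rw [← M.map_smul]
  congr 1
  rw [Matrix.smul_single]
  simp

lemma cp_of_choi (M : Mat n →ₗ[ℂ] Mat m) (h : (choi M).PosSemidef) : IsCP M := by
  intro d X hX
  obtain ⟨X₁, hX₁⟩ := psd_eq_star hX
  obtain ⟨C₁, hC₁⟩ := psd_eq_star h
  set W : Matrix ((n × Fin d) × (n × m)) (m × Fin d) ℂ :=
    Matrix.of fun k q => ∑ b : n, X₁ k.1 (b, q.2) * C₁ k.2 (b, q.1) with hW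
  have key : (Matrix.of fun p q : m × Fin d =>
      (M (sliceM X p.2 q.2)) p.1 q.1) = Wᴴ * W := by
    ext p q
    have expand : (M (sliceM X p.2 q.2)) p.1 q.1
        = ∑ a : n, ∑ b : n, X (a, p.2) (b, q.2) * (choi M) (a, p.1) (b, q.1) := by
      rw [map_apply_expand M (sliceM X p.2 q.2)]
      simp [Matrix.sum_apply, sliceM, choi]
    have hXe : ∀ a b, X (a, p.2) (b, q.2)
        = ∑ k : n × Fin d, star (X₁ k (a, p.2)) * X₁ k (b, q.2) := by
      intro a b; rw [hX₁]; simp [Matrix.mul_apply, Matrix.conjTranspose_apply]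
    have hCe : ∀ a b, (choi M) (a, p.1) (b, q.1)
        = ∑ l : n × m, star (C₁ l (a, p.1)) * C₁ l (b, q.1) := by
      intro a b; rw [hC₁]; simp [Matrix.mul_apply, Matrix.conjTranspose_apply]
    rw [Matrix.of_apply, expand]
    simp only [hXe, hCe]
    rw [Matrix.mul_apply]
    simp only [Matrix.conjTranspose_apply, hW, Matrix.of_apply]
    calc ∑ a : n, ∑ b : n,
          (∑ k : n × Fin d, star (X₁ k (a, p.2)) * X₁ k (b, q.2)) *
            ∑ l : n × m, star (C₁ l (a, p.1)) * C₁ l (b, q.1)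
        = ∑ a : n, ∑ b : n, ∑ k : n × Fin d, ∑ l : n × m,
            (star (X₁ k (a, p.2)) * X₁ k (b, q.2)) *
              (star (C₁ l (a, p.1)) * C₁ l (b, q.1)) := by
          refine Finset.sum_congr rfl fun a _ => Finset.sum_congr rfl fun b _ => ?_
          rw [Finset.sum_mul_sum]
      _ = ∑ k : n × Fin d, ∑ l : n × m, ∑ a : n, ∑ b : n,
            (star (X₁ k (a, p.2)) * X₁ k (b, q.2)) *
              (star (C₁ l (a, p.1)) * C₁ l (b, q.1)) :=
          sum_swap4 (fun (a : n) (b : n) (k : n × Fin d) (l : n × m) =>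
            (star (X₁ k (a, p.2)) * X₁ k (b, q.2)) *
              (star (C₁ l (a, p.1)) * C₁ l (b, q.1)))
      _ = ∑ x : (n × Fin d) × (n × m),
            star (∑ b : n, X₁ x.1 (b, p.2) * C₁ x.2 (b, p.1)) *
              ∑ b : n, X₁ x.1 (b, q.2) * C₁ x.2 (b, q.1) := by
          conv_rhs => rw [Fintype.sum_prod_type]
          refine Finset.sum_congr rfl fun k _ => Finset.sum_congr rfl fun l _ => ?_
          rw [star_sum, Finset.sum_mul_sum]
          refine Finset.sum_congr rfl fun a _ => Finset.sum_congr rfl fun b _ => ?_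
          rw [star_mul']
          ring
  rw [key]
  exact Matrix.posSemidef_conjTranspose_mul_self _

end Choi
section Aux3
variable {n m : Type} [Fintype n] [DecidableEq n] [Fintype m] [DecidableEq m]

lemma outer_psd (v : n → ℂ) : (Matrix.of fun a b => v a * star (v b)).PosSemidef := by
  have h : (Matrix.of fun a b => v a * star (v b)) =
      (Matrix.of fun (_ : Fin 1) b => star (v b))ᴴ *
        (Matrix.of fun (_ : Fin 1) b => star (v b)) := by
    ext a b
    simp [Matrix.mul_apply, Matrix.conjTranspose_apply]
  rw [h]
  exact Matrix.posSemidef_conjTranspose_mul_self _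

lemma trace_stdBasis (c c' : n) :
    (Matrix.single c c' (1:ℂ)).trace = if c = c' then 1 else 0 := by
  simp only [Matrix.trace, Matrix.diag, Matrix.single, Matrix.of_apply, ite_and]
  rw [Finset.sum_ite_eq]
  by_cases h : c = c' <;> simp [h, eq_comm]

lemma choi_psd_of_cp {nn mm : ℕ} (M : Mat (Fin nn) →ₗ[ℂ] Mat (Fin mm)) (h : IsCP M) :
    (choi M).PosSemidef := by
  set v : Fin nn × Fin nn → ℂ := fun x => if x.1 = x.2 then 1 else 0 with hv
  set Ω : Matrix (Fin nn × Fin nn) (Fin nn × Fin nn) ℂ :=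
    Matrix.of fun x y => v x * star (v y) with hΩ
  have hΩpsd : Ω.PosSemidef := outer_psd v
  have Y := h nn Ω hΩpsd
  have hslice : ∀ i j : Fin nn, sliceM Ω i j = Matrix.single i j (1:ℂ) := by
    intro i j; ext a b
    simp only [sliceM, hΩ, hv, Matrix.of_apply, Matrix.single]
    split_ifs <;> simp_all
  have hkey : choi M = (Matrix.of fun p q : Fin mm × Fin nn =>
      (M (sliceM Ω p.2 q.2)) p.1 q.1).submatrix
      (fun x : Fin nn × Fin mm => (x.2, x.1)) (fun x => (x.2, x.1)) := by
    ext x y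
    simp [choi, Matrix.submatrix_apply, hslice]
  rw [hkey]
  exact Y.submatrix _

lemma cp_apply_psd (M : Mat n →ₗ[ℂ] Mat m) (h : IsCP M) {X : Mat n}
    (hX : X.PosSemidef) : (M X).PosSemidef := by
  have hX' : (Matrix.of fun p q : n × Fin 1 => X p.1 q.1).PosSemidef := by
    have he : (Matrix.of fun p q : n × Fin 1 => X p.1 q.1)
        = X.submatrix Prod.fst Prod.fst := rfl
    rw [he]; exact hX.submatrix _
  have Y := h 1 _ hX'
  have hMX : M X = (Matrix.of fun p q : m × Fin 1 =>
      (M (sliceM (Matrix.of fun p q : n × Fin 1 => X p.1 q.1) p.2 q.2)) p.1 q.1).submatrix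
      (fun a : m => (a, (0 : Fin 1))) (fun a => (a, 0)) := by
    ext a b
    have hs : sliceM (Matrix.of fun p q : n × Fin 1 => X p.1 q.1) 0 0 = X := rfl
    simp [Matrix.submatrix_apply, hs]
  rw [hMX]
  exact Y.submatrix _

lemma dens_span (f : Mat n →ₗ[ℂ] ℂ)
    (h0 : ∀ ρ : Mat n, ρ.PosSemidef → ρ.trace = 1 → f ρ = 0) (X : Mat n) : f X = 0 := by
  have hEcc : ∀ c : n, f (Matrix.single c c 1) = 0 := by
    intro c
    refine h0 _ ?_ ?_
    · have he : Matrix.single c c (1:ℂ)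
          = Matrix.of fun a b => (fun x => if x = c then (1:ℂ) else 0) a *
              star ((fun x => if x = c then (1:ℂ) else 0) b) := by
        ext a b
        simp only [Matrix.single, Matrix.of_apply]
        split_ifs <;> simp_all
      rw [he]; exact outer_psd _
    · simp [trace_stdBasis]
  have hE : ∀ c c' : n, f (Matrix.single c c' 1) = 0 := by
    intro c c'
    by_cases hcc : c = c'
    · subst hcc; exact hEcc c
    · have key : ∀ v : n → ℂ, (∀ a : n, v a * star (v a)
          = (if a = c then (1:ℂ) else 0) + (if a = c' then 1 else 0)) →
          f (Matrix.of fun a b => v a * star (v b)) = 0 := by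
        intro v hv
        have htr : (Matrix.of fun a b => v a * star (v b)).trace = 2 := by
          simp only [Matrix.trace, Matrix.diag, Matrix.of_apply, hv,
            Finset.sum_add_distrib, Finset.sum_ite_eq', Finset.mem_univ, if_true]
          norm_num
        have h2 : (Matrix.of fun a b => v a * star (v b))
            = (2:ℂ) • (((1/2 : ℝ) : ℂ) • (Matrix.of fun a b => v a * star (v b))) := by
          rw [smul_smul]; norm_num
        rw [h2, f.map_smul]
        rw [h0 _ (psd_smul (outer_psd v) (by norm_num))
          (by rw [Matrix.trace_smul, htr]; norm_num)]
        simp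
      have hfu : f (Matrix.of fun a b =>
          ((if a = c then 1 else 0) + (if a = c' then 1 else 0)) *
          star ((if b = c then (1:ℂ) else 0) + (if b = c' then 1 else 0))) = 0 := by
        apply key
        intro a
        by_cases hac : a = c <;> by_cases hac' : a = c' <;>
          simp_all <;> exact absurd (hac.symm.trans hac') hcc
      have hfw : f (Matrix.of fun a b =>
          ((if a = c then 1 else 0) + (if a = c' then Complex.I else 0)) *
          star ((if b = c then (1:ℂ) else 0) + (if b = c' then Complex.I else 0))) = 0 := by
        apply key
        intro a
        by_cases hac : a = c <;> by_cases hac' : a = c' <;>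
          simp_all [Complex.ext_iff] <;> exact absurd (hac.symm.trans hac') hcc
      rw [stdBasis_decomp hcc]
      simp only [map_sub, map_add, f.map_smul, hfu, hfw, hEcc, smul_eq_mul]
      ring
  rw [Matrix.matrix_eq_sum_single X, map_sum]
  refine Finset.sum_eq_zero fun a _ => ?_
  rw [map_sum]
  refine Finset.sum_eq_zero fun b _ => ?_
  have hsm : Matrix.single a b (X a b) = X a b • Matrix.single a b (1:ℂ) := by
    rw [Matrix.smul_single]; simp
  rw [hsm, f.map_smul, hE, smul_zero]

end Aux3
section Aux4

lemma sum_swap12 {M : Type*} [AddCommMonoid M] {α β γ : Type*}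
    [Fintype α] [Fintype β] [Fintype γ] (f : α → β → γ → M) :
    ∑ x, ∑ b, ∑ c, f x b c = ∑ b, ∑ c, ∑ x, f x b c := by
  rw [Finset.sum_comm]
  exact Finset.sum_congr rfl fun b _ => Finset.sum_comm

lemma sum_swap13 {M : Type*} [AddCommMonoid M] {α β γ δ : Type*}
    [Fintype α] [Fintype β] [Fintype γ] [Fintype δ] (f : α → β → γ → δ → M) :
    ∑ x, ∑ b, ∑ c, ∑ d, f x b c d = ∑ b, ∑ c, ∑ d, ∑ x, f x b c d := by
  rw [Finset.sum_comm]
  exact Finset.sum_congr rfl fun b _ => sum_swap12 _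

lemma sum_swap14 {M : Type*} [AddCommMonoid M] {α β γ δ ε : Type*}
    [Fintype α] [Fintype β] [Fintype γ] [Fintype δ] [Fintype ε]
    (f : α → β → γ → δ → ε → M) :
    ∑ x, ∑ b, ∑ c, ∑ d, ∑ e, f x b c d e = ∑ b, ∑ c, ∑ d, ∑ e, ∑ x, f x b c d e := by
  rw [Finset.sum_comm]
  exact Finset.sum_congr rfl fun b _ => sum_swap13 _

lemma sum_swap15 {M : Type*} [AddCommMonoid M] {α β γ δ ε ζ : Type*}
    [Fintype α] [Fintype β] [Fintype γ] [Fintype δ] [Fintype ε] [Fintype ζ]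
    (f : α → β → γ → δ → ε → ζ → M) :
    ∑ x, ∑ b, ∑ c, ∑ d, ∑ e, ∑ g, f x b c d e g
      = ∑ b, ∑ c, ∑ d, ∑ e, ∑ g, ∑ x, f x b c d e g := by
  rw [Finset.sum_comm]
  exact Finset.sum_congr rfl fun b _ => sum_swap14 _

lemma sum_swap16 {M : Type*} [AddCommMonoid M] {α β γ δ ε ζ η : Type*}
    [Fintype α] [Fintype β] [Fintype γ] [Fintype δ] [Fintype ε] [Fintype ζ] [Fintype η]
    (f : α → β → γ → δ → ε → ζ → η → M) :
    ∑ x, ∑ b, ∑ c, ∑ d, ∑ e, ∑ g, ∑ h, f x b c d e g h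
      = ∑ b, ∑ c, ∑ d, ∑ e, ∑ g, ∑ h, ∑ x, f x b c d e g h := by
  rw [Finset.sum_comm]
  exact Finset.sum_congr rfl fun b _ => sum_swap15 _

lemma sum_swap17 {M : Type*} [AddCommMonoid M] {α β γ δ ε ζ η θ : Type*}
    [Fintype α] [Fintype β] [Fintype γ] [Fintype δ] [Fintype ε] [Fintype ζ] [Fintype η]
    [Fintype θ] (f : α → β → γ → δ → ε → ζ → η → θ → M) :
    ∑ x, ∑ b, ∑ c, ∑ d, ∑ e, ∑ g, ∑ h, ∑ i, f x b c d e g h i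
      = ∑ b, ∑ c, ∑ d, ∑ e, ∑ g, ∑ h, ∑ i, ∑ x, f x b c d e g h i := by
  rw [Finset.sum_comm]
  exact Finset.sum_congr rfl fun b _ => sum_swap16 _

lemma sum_swap44 {M : Type*} [AddCommMonoid M] {a1 a2 a3 a4 b1 b2 b3 b4 : Type*}
    [Fintype a1] [Fintype a2] [Fintype a3] [Fintype a4]
    [Fintype b1] [Fintype b2] [Fintype b3] [Fintype b4]
    (f : a1 → a2 → a3 → a4 → b1 → b2 → b3 → b4 → M) :
    ∑ x1, ∑ x2, ∑ x3, ∑ x4, ∑ y1, ∑ y2, ∑ y3, ∑ y4, f x1 x2 x3 x4 y1 y2 y3 y4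
      = ∑ y1, ∑ y2, ∑ y3, ∑ y4, ∑ x1, ∑ x2, ∑ x3, ∑ x4, f x1 x2 x3 x4 y1 y2 y3 y4 := by
  rw [sum_swap17 (fun x1 x2 x3 x4 y1 y2 y3 y4 => f x1 x2 x3 x4 y1 y2 y3 y4)]
  rw [sum_swap17 (fun x2 x3 x4 y1 y2 y3 y4 x1 => f x1 x2 x3 x4 y1 y2 y3 y4)]
  rw [sum_swap17 (fun x3 x4 y1 y2 y3 y4 x1 x2 => f x1 x2 x3 x4 y1 y2 y3 y4)]
  rw [sum_swap17 (fun x4 y1 y2 y3 y4 x1 x2 x3 => f x1 x2 x3 x4 y1 y2 y3 y4)]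

variable {nA mA nB mB : Type} [Fintype nA] [DecidableEq nA] [Fintype mA] [DecidableEq mA]
  [Fintype nB] [DecidableEq nB] [Fintype mB] [DecidableEq mB]

lemma tensorMap_apply (A : Mat nA →ₗ[ℂ] Mat mA) (B : Mat nB →ₗ[ℂ] Mat mB)
    (X : Mat (nA × nB)) :
    tensorMap A B X = ∑ c : nA, ∑ c' : nA, ∑ d : nB, ∑ d' : nB,
      X (c, d) (c', d') • ((A (Matrix.single c c' 1)) ⊗ₖ
        (B (Matrix.single d d' 1))) := rfl

lemma choi_tensorMap (A : Mat nA →ₗ[ℂ] Mat mA) (B : Mat nB →ₗ[ℂ] Mat mB) :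
    choi (tensorMap A B) = (choi A ⊗ₖ choi B).submatrix
      (fun x : (nA × nB) × (mA × mB) => ((x.1.1, x.2.1), (x.1.2, x.2.2)))
      (fun x => ((x.1.1, x.2.1), (x.1.2, x.2.2))) := by
  ext x y
  obtain ⟨⟨a, d⟩, u, v⟩ := x
  obtain ⟨⟨a', d'⟩, u', v'⟩ := y
  simp only [choi, Matrix.of_apply, tensorMap_apply, Matrix.sum_apply, Matrix.smul_apply,
    Matrix.submatrix_apply, Matrix.kroneckerMap_apply, Matrix.single,
    Prod.mk.injEq, ite_and, smul_eq_mul]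
  simp [ite_mul, zero_mul, Finset.sum_ite_irrel, Finset.sum_ite_eq, Finset.sum_const_zero]

end Aux4
section Aux5
variable {ιiA ιiB ιoA ιoB : Type}
    [Fintype ιiA] [DecidableEq ιiA] [Fintype ιiB] [DecidableEq ιiB]
    [Fintype ιoA] [DecidableEq ιoA] [Fintype ιoB] [DecidableEq ιoB]
    {nA mA nB mB : Type} [Fintype nA] [DecidableEq nA] [Fintype mA] [DecidableEq mA]
    [Fintype nB] [DecidableEq nB] [Fintype mB] [DecidableEq mB]

lemma traceT (p : ιiA → ιiB → ιoA → ιoB → ℝ)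
    (A : ιoA → ιiA → (Mat nA →ₗ[ℂ] Mat mA)) (B : ιoB → ιiB → (Mat nB →ₗ[ℂ] Mat mB))
    (X : Mat (nA × nB)) :
    ((∑ iA, ∑ iB, ∑ oA, ∑ oB,
        (p iA iB oA oB : ℂ) • tensorMap (A oA iA) (B oB iB)) X).trace
    = ∑ c : nA, ∑ c' : nA, ∑ d : nB, ∑ d' : nB, X (c, d) (c', d') *
        (∑ iA, ∑ iB, ∑ oA, ∑ oB, (p iA iB oA oB : ℂ)
          * ((A oA iA) (Matrix.single c c' 1)).trace
          * ((B oB iB) (Matrix.single d d' 1)).trace) := by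
  have step1 : ((∑ iA, ∑ iB, ∑ oA, ∑ oB,
        (p iA iB oA oB : ℂ) • tensorMap (A oA iA) (B oB iB)) X).trace
      = ∑ iA, ∑ iB, ∑ oA, ∑ oB, ∑ c : nA, ∑ c' : nA, ∑ d : nB, ∑ d' : nB,
          (p iA iB oA oB : ℂ) * (X (c, d) (c', d')
            * (((A oA iA) (Matrix.single c c' 1)).trace
              * ((B oB iB) (Matrix.single d d' 1)).trace)) := by
    simp only [LinearMap.sum_apply, LinearMap.smul_apply, Matrix.trace_sum,
      Matrix.trace_smul, smul_eq_mul, tensorMap_apply, Matrix.trace_kronecker,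
      Finset.mul_sum]
  rw [step1]
  rw [sum_swap44 (fun iA iB oA oB (c : nA) (c' : nA) (d : nB) (d' : nB) =>
    (p iA iB oA oB : ℂ) * (X (c, d) (c', d')
      * (((A oA iA) (Matrix.single c c' 1)).trace
        * ((B oB iB) (Matrix.single d d' 1)).trace)))]
  simp only [Finset.mul_sum]
  refine Finset.sum_congr rfl fun c _ => Finset.sum_congr rfl fun c' _ =>
    Finset.sum_congr rfl fun d _ => Finset.sum_congr rfl fun d' _ =>
    Finset.sum_congr rfl fun iA _ => Finset.sum_congr rfl fun iB _ =>
    Finset.sum_congr rfl fun oA _ => Finset.sum_congr rfl fun oB _ => by ring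

end Aux5

set_option maxHeartbeats 1000000 in
/-- for a conditional probability distribution p(i_A,i_B|o_A,o_B), pairing
to 1 with all classical channels is equivalent to producing a CPTP map from every pair of
quantum instruments. -/
theorem stmt_12 (ιiA ιiB ιoA ιoB : Type)
    [Fintype ιiA] [DecidableEq ιiA] [Fintype ιiB] [DecidableEq ιiB]
    [Fintype ιoA] [DecidableEq ιoA] [Fintype ιoB] [DecidableEq ιoB]
    (p : ιiA → ιiB → ιoA → ιoB → ℝ)
    (hp0 : ∀ iA iB oA oB, 0 ≤ p iA iB oA oB)
    (hp1 : ∀ oA oB, ∑ iA, ∑ iB, p iA iB oA oB = 1) :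
    (∀ (pA : ιiA → ιoA → ℝ) (pB : ιiB → ιoB → ℝ),
      (∀ i o, 0 ≤ pA i o) → (∀ i : ιiA, ∑ o, pA i o = 1) →
      (∀ i o, 0 ≤ pB i o) → (∀ i : ιiB, ∑ o, pB i o = 1) →
      ∑ iA, ∑ iB, ∑ oA, ∑ oB, p iA iB oA oB * pA iA oA * pB iB oB = 1) ↔
    (∀ (nA mA nB mB : ℕ)
      (A : ιoA → ιiA → (Mat (Fin nA) →ₗ[ℂ] Mat (Fin mA)))
      (B : ιoB → ιiB → (Mat (Fin nB) →ₗ[ℂ] Mat (Fin mB))),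
      (∀ oA iA, IsCP (A oA iA)) → (∀ iA, IsTP (∑ oA, A oA iA)) →
      (∀ oB iB, IsCP (B oB iB)) → (∀ iB, IsTP (∑ oB, B oB iB)) →
      IsCP (∑ iA, ∑ iB, ∑ oA, ∑ oB,
          (p iA iB oA oB : ℂ) • tensorMap (A oA iA) (B oB iB)) ∧
      IsTP (∑ iA, ∑ iB, ∑ oA, ∑ oB,
          (p iA iB oA oB : ℂ) • tensorMap (A oA iA) (B oB iB))) := by
  constructor
  · -- classical ⇒ quantum
    intro h1 nA mA nB mB A B hAcp hAtp hBcp hBtp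
    constructor
    · -- CP part
      apply cp_of_choi
      have hc : choi (∑ iA, ∑ iB, ∑ oA, ∑ oB,
          (p iA iB oA oB : ℂ) • tensorMap (A oA iA) (B oB iB))
          = ∑ iA, ∑ iB, ∑ oA, ∑ oB,
            (p iA iB oA oB : ℂ) • choi (tensorMap (A oA iA) (B oB iB)) := by
        ext x y
        simp [choi, LinearMap.sum_apply, LinearMap.smul_apply, Matrix.sum_apply,
          Matrix.smul_apply]
      rw [hc]
      refine psd_sum _ _ fun iA _ => psd_sum _ _ fun iB _ => psd_sum _ _ fun oA _ =>
        psd_sum _ _ fun oB _ => ?_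
      refine psd_smul ?_ (hp0 iA iB oA oB)
      rw [choi_tensorMap]
      exact (psd_kron (choi_psd_of_cp _ (hAcp oA iA))
        (choi_psd_of_cp _ (hBcp oB iB))).submatrix _
    · -- TP part
      -- the key bilinear identity
      have hdd : ∀ (ρ : Mat (Fin nA)) (σ : Mat (Fin nB)), ρ.PosSemidef → ρ.trace = 1 →
          σ.PosSemidef → σ.trace = 1 →
          (∑ iA, ∑ iB, ∑ oA, ∑ oB, (p iA iB oA oB : ℂ)
            * ((A oA iA) ρ).trace * ((B oB iB) σ).trace) = 1 := by
        intro ρ σ hρ hρt hσ hσt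
        set pA : ιiA → ιoA → ℝ := fun iA oA => (((A oA iA) ρ).trace).re with hpA
        set pB : ιiB → ιoB → ℝ := fun iB oB => (((B oB iB) σ).trace).re with hpB
        have hAre : ∀ oA iA, (((A oA iA) ρ).trace) = ((pA iA oA : ℝ) : ℂ) := by
          intro oA iA
          have h := trace_psd_nonneg (cp_apply_psd _ (hAcp oA iA) hρ)
          rw [Complex.nonneg_iff] at h
          exact Complex.ext (by simp [hpA]) (by simp [hpA, ← h.2])
        have hBre : ∀ oB iB, (((B oB iB) σ).trace) = ((pB iB oB : ℝ) : ℂ) := by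
          intro oB iB
          have h := trace_psd_nonneg (cp_apply_psd _ (hBcp oB iB) hσ)
          rw [Complex.nonneg_iff] at h
          exact Complex.ext (by simp [hpB]) (by simp [hpB, ← h.2])
        have hA0 : ∀ i o, 0 ≤ pA i o := by
          intro i o
          have h := trace_psd_nonneg (cp_apply_psd _ (hAcp o i) hρ)
          rw [Complex.nonneg_iff] at h
          simpa [hpA] using h.1
        have hB0 : ∀ i o, 0 ≤ pB i o := by
          intro i o
          have h := trace_psd_nonneg (cp_apply_psd _ (hBcp o i) hσ)
          rw [Complex.nonneg_iff] at h
          simpa [hpB] using h.1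
        have hA1 : ∀ iA, ∑ oA, pA iA oA = 1 := by
          intro iA
          have h := hAtp iA ρ
          rw [LinearMap.sum_apply, Matrix.trace_sum, hρt] at h
          have h' := congrArg Complex.re h
          rw [Complex.re_sum] at h'
          simpa [hpA] using h'
        have hB1 : ∀ iB, ∑ oB, pB iB oB = 1 := by
          intro iB
          have h := hBtp iB σ
          rw [LinearMap.sum_apply, Matrix.trace_sum, hσt] at h
          have h' := congrArg Complex.re h
          rw [Complex.re_sum] at h'
          simpa [hpB] using h'
        have key := h1 pA pB hA0 hA1 hB0 hB1
        calc (∑ iA, ∑ iB, ∑ oA, ∑ oB, (p iA iB oA oB : ℂ)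
              * ((A oA iA) ρ).trace * ((B oB iB) σ).trace)
            = ∑ iA, ∑ iB, ∑ oA, ∑ oB,
                ((p iA iB oA oB * pA iA oA * pB iB oB : ℝ) : ℂ) := by
              refine Finset.sum_congr rfl fun iA _ => Finset.sum_congr rfl fun iB _ =>
                Finset.sum_congr rfl fun oA _ => Finset.sum_congr rfl fun oB _ => ?_
              rw [hAre, hBre]
              push_cast
              ring
          _ = ((∑ iA, ∑ iB, ∑ oA, ∑ oB,
                (p iA iB oA oB * pA iA oA * pB iB oB) : ℝ) : ℂ) := by
              norm_cast
          _ = 1 := by rw [key]; norm_num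
      have claimA : ∀ (Y : Mat (Fin nA)) (σ : Mat (Fin nB)), σ.PosSemidef → σ.trace = 1 →
          (∑ iA, ∑ iB, ∑ oA, ∑ oB, (p iA iB oA oB : ℂ)
            * ((A oA iA) Y).trace * ((B oB iB) σ).trace) = Y.trace := by
        intro Y σ hσ hσt
        have hz := dens_span
          { toFun := fun Y => (∑ iA, ∑ iB, ∑ oA, ∑ oB, (p iA iB oA oB : ℂ)
              * ((A oA iA) Y).trace * ((B oB iB) σ).trace) - Y.trace
            map_add' := by
              intro Y1 Y2
              simp only [map_add, Matrix.trace_add, mul_add, add_mul,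
                Finset.sum_add_distrib]
              ring
            map_smul' := by
              intro r Y0
              simp only [LinearMap.map_smul, Matrix.trace_smul, smul_eq_mul,
                RingHom.id_apply, mul_sub, Finset.mul_sum]
              congr 1
              refine Finset.sum_congr rfl fun iA _ => Finset.sum_congr rfl fun iB _ =>
                Finset.sum_congr rfl fun oA _ => Finset.sum_congr rfl fun oB _ => by ring
              all_goals ring }
          (fun ρ hρ hρt => by
            simp only [LinearMap.coe_mk, AddHom.coe_mk]
            rw [hdd ρ σ hρ hρt hσ hσt, hρt]
            ring) Y
        simp only [LinearMap.coe_mk, AddHom.coe_mk] at hz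
        have := sub_eq_zero.mp hz
        exact this
      have claim : ∀ (Y : Mat (Fin nA)) (Z : Mat (Fin nB)),
          (∑ iA, ∑ iB, ∑ oA, ∑ oB, (p iA iB oA oB : ℂ)
            * ((A oA iA) Y).trace * ((B oB iB) Z).trace) = Y.trace * Z.trace := by
        intro Y Z
        have hz := dens_span
          { toFun := fun Z => (∑ iA, ∑ iB, ∑ oA, ∑ oB, (p iA iB oA oB : ℂ)
              * ((A oA iA) Y).trace * ((B oB iB) Z).trace) - Y.trace * Z.trace
            map_add' := by
              intro Z1 Z2
              simp only [map_add, Matrix.trace_add, mul_add, add_mul,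
                Finset.sum_add_distrib]
              ring
            map_smul' := by
              intro r Z0
              simp only [LinearMap.map_smul, Matrix.trace_smul, smul_eq_mul,
                RingHom.id_apply, mul_sub, Finset.mul_sum]
              congr 1
              refine Finset.sum_congr rfl fun iA _ => Finset.sum_congr rfl fun iB _ =>
                Finset.sum_congr rfl fun oA _ => Finset.sum_congr rfl fun oB _ => by ring
              all_goals ring }
          (fun σ hσ hσt => by
            simp only [LinearMap.coe_mk, AddHom.coe_mk]
            rw [claimA Y σ hσ hσt, hσt]
            ring) Z
        simp only [LinearMap.coe_mk, AddHom.coe_mk] at hz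
        exact sub_eq_zero.mp hz
      intro X
      rw [traceT]
      calc ∑ c : Fin nA, ∑ c' : Fin nA, ∑ d : Fin nB, ∑ d' : Fin nB,
            X (c, d) (c', d') * (∑ iA, ∑ iB, ∑ oA, ∑ oB, (p iA iB oA oB : ℂ)
              * ((A oA iA) (Matrix.single c c' 1)).trace
              * ((B oB iB) (Matrix.single d d' 1)).trace)
          = ∑ c : Fin nA, ∑ c' : Fin nA, ∑ d : Fin nB, ∑ d' : Fin nB,
            X (c, d) (c', d') *
              ((if c = c' then 1 else 0) * (if d = d' then 1 else 0)) := by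
            refine Finset.sum_congr rfl fun c _ => Finset.sum_congr rfl fun c' _ =>
              Finset.sum_congr rfl fun d _ => Finset.sum_congr rfl fun d' _ => ?_
            rw [claim, trace_stdBasis, trace_stdBasis]
        _ = X.trace := by
            rw [Matrix.trace, Fintype.sum_prod_type]
            simp [mul_ite, mul_one, mul_zero, Finset.sum_ite_irrel, Finset.sum_ite_eq,
              Finset.sum_const_zero, Matrix.diag]
  · -- quantum ⇒ classical
    intro h2 pA pB hA0 hA1 hB0 hB1
    set A : ιoA → ιiA → (Mat (Fin 1) →ₗ[ℂ] Mat (Fin 1)) :=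
      fun oA iA => ((pA iA oA : ℝ) : ℂ) • LinearMap.id with hAdef
    set B : ιoB → ιiB → (Mat (Fin 1) →ₗ[ℂ] Mat (Fin 1)) :=
      fun oB iB => ((pB iB oB : ℝ) : ℂ) • LinearMap.id with hBdef
    have hAcp : ∀ oA iA, IsCP (A oA iA) := by
      intro oA iA d X hX
      have he : (Matrix.of fun pp qq : Fin 1 × Fin d =>
          ((A oA iA) (sliceM X pp.2 qq.2)) pp.1 qq.1) = ((pA iA oA : ℝ) : ℂ) • X := by
        ext pp qq
        simp [hAdef, sliceM, Matrix.smul_apply, smul_eq_mul]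
      rw [he]
      exact psd_smul hX (hA0 iA oA)
    have hBcp : ∀ oB iB, IsCP (B oB iB) := by
      intro oB iB d X hX
      have he : (Matrix.of fun pp qq : Fin 1 × Fin d =>
          ((B oB iB) (sliceM X pp.2 qq.2)) pp.1 qq.1) = ((pB iB oB : ℝ) : ℂ) • X := by
        ext pp qq
        simp [hBdef, sliceM, Matrix.smul_apply, smul_eq_mul]
      rw [he]
      exact psd_smul hX (hB0 iB oB)
    have hAtp : ∀ iA, IsTP (∑ oA, A oA iA) := by
      intro iA X
      simp only [LinearMap.sum_apply, hAdef, LinearMap.smul_apply, LinearMap.id_coe,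
        id_eq, Matrix.trace_sum, Matrix.trace_smul, smul_eq_mul]
      rw [← Finset.sum_mul]
      have hsum : (∑ oA, ((pA iA oA : ℝ) : ℂ)) = 1 := by
        rw [← Complex.ofReal_sum, hA1 iA, Complex.ofReal_one]
      rw [hsum, one_mul]
    have hBtp : ∀ iB, IsTP (∑ oB, B oB iB) := by
      intro iB X
      simp only [LinearMap.sum_apply, hBdef, LinearMap.smul_apply, LinearMap.id_coe,
        id_eq, Matrix.trace_sum, Matrix.trace_smul, smul_eq_mul]
      rw [← Finset.sum_mul]
      have hsum : (∑ oB, ((pB iB oB : ℝ) : ℂ)) = 1 := by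
        rw [← Complex.ofReal_sum, hB1 iB, Complex.ofReal_one]
      rw [hsum, one_mul]
    have hTP := (h2 1 1 1 1 A B hAcp hAtp hBcp hBtp).2
    have h1' := hTP (1 : Mat (Fin 1 × Fin 1))
    rw [traceT] at h1'
    have htr1 : (1 : Mat (Fin 1 × Fin 1)).trace = 1 := by
      simp [Matrix.trace_one]
    rw [htr1] at h1'
    simp only [Fin.sum_univ_one, Matrix.one_apply_eq, one_mul, hAdef, hBdef,
      LinearMap.smul_apply, LinearMap.id_coe, id_eq, Matrix.trace_smul, smul_eq_mul,
      trace_stdBasis, if_pos rfl, mul_one] at h1'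
    have hc : ((∑ iA, ∑ iB, ∑ oA, ∑ oB, p iA iB oA oB * pA iA oA * pB iB oB : ℝ) : ℂ)
        = ((1 : ℝ) : ℂ) := by
      push_cast
      rw [← h1']
      refine Finset.sum_congr rfl fun iA _ => Finset.sum_congr rfl fun iB _ =>
        Finset.sum_congr rfl fun oA _ => Finset.sum_congr rfl fun oB _ => ?_
      simp
    exact_mod_cast hc
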